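/- arXiv:1902.01373 — 2 statements merged into one kernel-verified Lean document; each statement's English description precedes it below -/
import Mathlib

section
/- Let f : ℝ^d → ℝ have M-Lipschitz gradient, let θ ∈ ℝ^d satisfy ‖∇f(θ)‖ ≤ R, let u ∼ N(0, I_d), and set φ(ν, u) = (f(θ + νu) − f(θ))/ν. If ν ≤ R/(M·‖u‖_{Ψ₂}), then the sub-exponential norm of φ(ν, u) satisfies ‖φ(ν, u)‖_{Ψ₁} ≤ 2R·‖u‖_{Ψ₂}. -/
open MeasureTheory ProbabilityTheory Real
open scoped ENNReal NNReal RealInnerProductSpace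

noncomputable section

/-- `ℝ^d` with the Euclidean structure. -/
abbrev Euc (d : ℕ) := EuclideanSpace ℝ (Fin d)

/-- Standard Gaussian measure `N(0, I_d)` on `ℝ^d`. -/
def stdGaussian (d : ℕ) : Measure (Euc d) :=
  (Measure.pi fun _ : Fin d => gaussianReal 0 1).map
    (MeasurableEquiv.toLp 2 (Fin d → ℝ))

/-- The sub-exponential norm `‖X‖_{Ψ₁} = sup_{p ≥ 1} p⁻¹ E[|X|^p]^{1/p}`. -/
def subExpNorm {α : Type*} [MeasurableSpace α] (μ : Measure α) (X : α → ℝ) : ℝ :=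
  ⨆ p : {p : ℝ // 1 ≤ p}, ((p : ℝ))⁻¹ * (∫ x, |X x| ^ (p : ℝ) ∂μ) ^ ((p : ℝ))⁻¹

/-- The sub-Gaussian norm `‖X‖_{Ψ₂} = sup_{p ≥ 1} p^{-1/2} E[|X|^p]^{1/p}`. -/
def subGaussNorm {α : Type*} [MeasurableSpace α] (μ : Measure α) (X : α → ℝ) : ℝ :=
  ⨆ p : {p : ℝ // 1 ≤ p},
    ((p : ℝ)) ^ (-(1 / 2 : ℝ)) * (∫ x, |X x| ^ (p : ℝ) ∂μ) ^ ((p : ℝ))⁻¹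

instance (d : ℕ) : IsProbabilityMeasure (stdGaussian d) :=
  Measure.isProbabilityMeasure_map (MeasurableEquiv.measurable _).aemeasurable

instance : Nonempty {p : ℝ // 1 ≤ p} := ⟨⟨1, le_refl 1⟩⟩

/-! ### Auxiliary lemmas -/

section Aux

lemma descent_lemma {d : ℕ} (M : ℝ) (f : Euc d → ℝ) (f' : Euc d → Euc d)
    (hgrad : ∀ θ, HasGradientAt f (f' θ) θ)
    (hlip : ∀ θ θ' : Euc d, ‖f' θ - f' θ'‖ ≤ M * ‖θ - θ'‖) (x y : Euc d) :
    |f y - f x - ⟪f' x, y - x⟫| ≤ M / 2 * ‖y - x‖ ^ 2 := by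
  set v := y - x with hv
  have hcomp : ∀ t : ℝ, HasDerivAt (fun t : ℝ => f (x + t • v)) ⟪f' (x + t • v), v⟫ t := by
    intro t
    have h1 : HasDerivAt (fun t : ℝ => x + t • v) v t := by
      simpa using ((hasDerivAt_id t).smul_const v).const_add x
    have h2 := (hgrad (x + t • v)).hasFDerivAt.comp_hasDerivAt t h1
    simp only [InnerProductSpace.toDual_apply_apply] at h2; exact h2
  set g : ℝ → ℝ := fun t => f (x + t • v) - t * ⟪f' x, v⟫ with hg
  have hgderiv : ∀ t : ℝ, HasDerivAt g (⟪f' (x + t • v) - f' x, v⟫) t := by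
    intro t
    have := (hcomp t).sub ((hasDerivAt_id t).const_mul ⟪f' x, v⟫)
    simp only [inner_sub_left]
    have e1 : g = (fun t => f (x + t • v)) - fun y => ⟪f' x, v⟫ * id y := by ext s; simp only [id, hg, Pi.sub_apply]; ring
    rw [mul_one] at this; rw [e1]; exact this
  have hbd : ∀ t ∈ Set.Icc (0:ℝ) 1, |⟪f' (x + t • v) - f' x, v⟫| ≤ M * t * ‖v‖ ^ 2 := by
    intro t ht
    calc |⟪f' (x + t • v) - f' x, v⟫| ≤ ‖f' (x + t • v) - f' x‖ * ‖v‖ := abs_real_inner_le_norm _ _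
    _ ≤ (M * ‖x + t • v - x‖) * ‖v‖ := by gcongr; exact hlip _ _
    _ = M * t * ‖v‖ ^ 2 := by
        have : ‖x + t • v - x‖ = t * ‖v‖ := by
          simp [norm_smul, abs_of_nonneg ht.1]
        rw [this]; ring
  have key : ∀ ε : ℝ, ε = 1 ∨ ε = -1 → ε * (g 1 - g 0) ≤ M / 2 * ‖v‖ ^ 2 := by
    intro ε hε
    set w : ℝ → ℝ := fun t => M / 2 * ‖v‖ ^ 2 * t ^ 2 - ε * (g t - g 0) with hw
    have hwderiv : ∀ t : ℝ, HasDerivAt w (M * ‖v‖ ^ 2 * t - ε * ⟪f' (x + t • v) - f' x, v⟫) t := by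
      intro t
      have h1 : HasDerivAt (fun t : ℝ => M / 2 * ‖v‖ ^ 2 * t ^ 2) (M / 2 * ‖v‖ ^ 2 * (2 * t ^ 1)) t :=
        (hasDerivAt_pow 2 t).const_mul (M / 2 * ‖v‖ ^ 2)
      have h2 := ((hgderiv t).sub_const (g 0)).const_mul ε
      have := h1.sub h2
      rw [show M / 2 * ‖v‖ ^ 2 * (2 * t ^ 1) = M * ‖v‖ ^ 2 * t by ring] at this
      exact this
    have hmono : MonotoneOn w (Set.Icc (0:ℝ) 1) := by
      apply monotoneOn_of_deriv_nonneg (convex_Icc 0 1)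
      · exact (Differentiable.continuous fun t => (hwderiv t).differentiableAt).continuousOn
      · intro t ht
        exact ((hwderiv t).differentiableAt).differentiableWithinAt
      · intro t ht
        rw [interior_Icc] at ht
        rw [(hwderiv t).deriv]
        have hb := hbd t ⟨le_of_lt ht.1, le_of_lt ht.2⟩
        have : ε * ⟪f' (x + t • v) - f' x, v⟫ ≤ M * t * ‖v‖ ^ 2 := by
          rcases hε with h | h <;> subst h
          · rw [one_mul]; exact (abs_le.mp hb).2
          · rw [neg_one_mul]; exact neg_le.2 (abs_le.mp hb).1
        nlinarith [this]
    have h01 := hmono (Set.left_mem_Icc.mpr zero_le_one) (Set.right_mem_Icc.mpr zero_le_one) zero_le_one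
    simp only [hw] at h01
    nlinarith [h01]
  have h1 : g 1 - g 0 = f y - f x - ⟪f' x, y - x⟫ := by
    simp only [hg, one_smul, zero_smul, add_zero, zero_mul, hv]
    have : x + (y - x) = y := by abel
    rw [this]; ring
  rw [← h1, abs_le]
  constructor
  · have := key (-1) (Or.inr rfl); linarith
  · have := key 1 (Or.inl rfl); linarith

lemma integrable_exp_quarter_sq_gaussian :
    Integrable (fun x : ℝ => rexp (x ^ 2 / 4)) (gaussianReal 0 1) := by
  rw [gaussianReal_of_var_ne_zero 0 one_ne_zero]
  rw [integrable_withDensity_iff (measurable_gaussianPDF 0 1)]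
  · have heq : (fun x : ℝ => rexp (x ^ 2 / 4) * (gaussianPDF 0 1 x).toReal)
        = fun x : ℝ => (√(2 * π))⁻¹ * rexp (-(4 : ℝ)⁻¹ * x ^ 2) := by
      ext x
      rw [gaussianPDF, ENNReal.toReal_ofReal (gaussianPDFReal_nonneg _ _ _), gaussianPDFReal]
      simp only [NNReal.coe_one, mul_one, sub_zero]
      rw [mul_comm, mul_assoc, ← Real.exp_add]
      ring_nf
    rw [heq]
    exact (integrable_exp_neg_mul_sq (by norm_num : (0:ℝ) < 4⁻¹)).const_mul _
  · exact ae_of_all _ fun x => ENNReal.ofReal_lt_top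

lemma euc_normsq (d : ℕ) (y : Euc d) : ‖y‖ ^ 2 = ∑ i, (y i) ^ 2 := by
  rw [EuclideanSpace.norm_eq, sq_sqrt (by positivity)]
  simp [Real.norm_eq_abs, sq_abs]

lemma integrable_exp_quarter_normsq_std (d : ℕ) :
    Integrable (fun u : Euc d => rexp (‖u‖ ^ 2 / 4)) (stdGaussian d) := by
  rw [_root_.stdGaussian, integrable_map_equiv]
  have : ((fun u : Euc d => rexp (‖u‖ ^ 2 / 4)) ∘ (MeasurableEquiv.toLp 2 (Fin d → ℝ)))
      = fun x : Fin d → ℝ => ∏ i, rexp ((x i) ^ 2 / 4) := by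
    ext x
    simp only [Function.comp_apply, euc_normsq, ← Real.exp_sum, ← Finset.sum_div]
    congr 1
  rw [this]
  letI : MeasureSpace ℝ := ⟨gaussianReal 0 1⟩
  have : SigmaFinite (volume : Measure ℝ) := by
    constructor
    exact (inferInstance : SigmaFinite (gaussianReal 0 1)).1
  exact Integrable.fintype_prod (f := fun _ : Fin d => fun x : ℝ => rexp (x ^ 2 / 4))
    (fun i => integrable_exp_quarter_sq_gaussian)

lemma rpow_le_rpow_mul_exp {s a : ℝ} (hs : 0 ≤ s) (ha : 0 < a) :
    s ^ a ≤ a ^ a * rexp s := by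
  rcases eq_or_lt_of_le hs with h | h
  · rw [← h, Real.zero_rpow (ne_of_gt ha)]
    positivity
  · have hlog : Real.log (s / a) ≤ s / a - 1 := Real.log_le_sub_one_of_pos (by positivity)
    rw [Real.log_div (ne_of_gt h) (ne_of_gt ha)] at hlog
    have h2 : a * Real.log s ≤ a * Real.log a + s := by
      have := mul_le_mul_of_nonneg_left hlog (le_of_lt ha)
      have ha' : a * (s / a - 1) = s - a := by field_simp
      nlinarith
    calc s ^ a = rexp (a * Real.log s) := by
          rw [Real.rpow_def_of_pos h, mul_comm]
    _ ≤ rexp (a * Real.log a + s) := Real.exp_le_exp.2 h2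
    _ = a ^ a * rexp s := by
          rw [Real.exp_add, Real.rpow_def_of_pos ha, mul_comm a (Real.log a)]

/-- abbreviation for the exponential moment -/
def C0 (d : ℕ) : ℝ := ∫ u, rexp (‖u‖ ^ 2 / 4) ∂(stdGaussian d)

lemma one_le_C0 (d : ℕ) : 1 ≤ C0 d := by
  have h := integral_mono (integrable_const (1:ℝ)) (integrable_exp_quarter_normsq_std d)
    (fun u => by simpa using Real.one_le_exp (by positivity))
  simpa [C0] using h

lemma norm_rpow_pointwise (d : ℕ) (q : ℝ) (hq : 0 < q) (u : Euc d) :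
    ‖u‖ ^ q ≤ 2 ^ q * (q / 2) ^ (q / 2) * rexp (‖u‖ ^ 2 / 4) := by
  set s : ℝ := ‖u‖ ^ 2 / 4 with hs
  have hs0 : 0 ≤ s := by positivity
  have h1 : s ^ (q / 2) ≤ (q / 2) ^ (q / 2) * rexp s :=
    rpow_le_rpow_mul_exp hs0 (by positivity)
  have h2 : ‖u‖ ^ q = 2 ^ q * s ^ (q / 2) := by
    rw [hs]
    rw [Real.div_rpow (by positivity) (by norm_num)]
    rw [← Real.rpow_natCast ‖u‖ 2, ← Real.rpow_mul (norm_nonneg u)]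
    have h4 : (4 : ℝ) ^ (q / 2) = 2 ^ q := by
      rw [show (4:ℝ) = 2 ^ (2:ℝ) by
        rw [show (2:ℝ)^(2:ℝ) = 2^(2:ℕ) by rw [← Real.rpow_natCast]; norm_num]; norm_num]
      rw [← Real.rpow_mul (by norm_num)]
      ring_nf
    rw [h4]
    field_simp
    rw [show ((2:ℕ):ℝ) * q / 2 = q by push_cast; ring]
  rw [h2, mul_assoc]
  have := mul_le_mul_of_nonneg_left h1 (by positivity : (0:ℝ) ≤ 2 ^ q)
  linarith

lemma integrable_norm_rpow_std (d : ℕ) (q : ℝ) (hq : 0 < q) :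
    Integrable (fun u : Euc d => ‖u‖ ^ q) (stdGaussian d) := by
  apply Integrable.mono (((integrable_exp_quarter_normsq_std d)).const_mul
    (2 ^ q * (q / 2) ^ (q / 2)))
  · exact (continuous_norm.rpow_const (fun u => Or.inr (le_of_lt hq))).aestronglyMeasurable
  · refine ae_of_all _ fun u => ?_
    rw [Real.norm_eq_abs, abs_of_nonneg (by positivity), Real.norm_eq_abs,
      abs_of_nonneg (by positivity)]
    exact norm_rpow_pointwise d q hq u

lemma integral_norm_rpow_le (d : ℕ) (q : ℝ) (hq : 0 < q) :
    ∫ u, ‖u‖ ^ q ∂(stdGaussian d) ≤ 2 ^ q * (q / 2) ^ (q / 2) * C0 d := by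
  have h := integral_mono (integrable_norm_rpow_std d q hq)
    (((integrable_exp_quarter_normsq_std d)).const_mul (2 ^ q * (q / 2) ^ (q / 2)))
    (fun u => norm_rpow_pointwise d q hq u)
  calc ∫ u, ‖u‖ ^ q ∂(stdGaussian d)
      ≤ ∫ u, 2 ^ q * (q / 2) ^ (q / 2) * rexp (‖u‖ ^ 2 / 4) ∂(stdGaussian d) := h
    _ = 2 ^ q * (q / 2) ^ (q / 2) * C0 d := by rw [integral_const_mul]; rfl

lemma moment_bound (d : ℕ) (q : ℝ) (hq : 1 ≤ q) :
    q ^ (-(1/2 : ℝ)) * (∫ u, ‖u‖ ^ q ∂(stdGaussian d)) ^ q⁻¹ ≤ 2 * C0 d := by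
  have hq0 : (0:ℝ) < q := lt_of_lt_of_le one_pos hq
  have hC1 := one_le_C0 d
  have hC0 : (0:ℝ) ≤ C0 d := le_trans zero_le_one hC1
  have hint : (0:ℝ) ≤ ∫ u, ‖u‖ ^ q ∂(stdGaussian d) :=
    integral_nonneg fun u => by positivity
  have h1 : (∫ u, ‖u‖ ^ q ∂(stdGaussian d)) ^ q⁻¹
      ≤ (2 ^ q * (q / 2) ^ (q / 2) * C0 d) ^ q⁻¹ :=
    Real.rpow_le_rpow hint (integral_norm_rpow_le d q hq0) (by positivity)
  have h2 : (2 ^ q * (q / 2) ^ (q / 2) * C0 d) ^ q⁻¹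
      = 2 * (q / 2) ^ (2⁻¹ : ℝ) * C0 d ^ q⁻¹ := by
    rw [Real.mul_rpow (by positivity) hC0, Real.mul_rpow (by positivity) (by positivity)]
    rw [← Real.rpow_mul (by norm_num : (0:ℝ) ≤ 2), mul_inv_cancel₀ (ne_of_gt hq0),
      Real.rpow_one]
    rw [← Real.rpow_mul (by positivity)]
    have he : q / 2 * q⁻¹ = (2⁻¹ : ℝ) := by field_simp
    rw [he]
  have h3 : C0 d ^ q⁻¹ ≤ C0 d := by
    calc C0 d ^ q⁻¹ ≤ C0 d ^ (1:ℝ) :=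
          Real.rpow_le_rpow_of_exponent_le hC1 (by
            rw [inv_le_one_iff₀]; right; exact hq)
      _ = C0 d := Real.rpow_one _
  have h4 : q ^ (-(1/2 : ℝ)) * (2 * (q / 2) ^ (2⁻¹ : ℝ) * C0 d) ≤ 2 * C0 d := by
    have hqd : (q / 2) ^ (2⁻¹ : ℝ) = q ^ (2⁻¹ : ℝ) / 2 ^ (2⁻¹ : ℝ) :=
      Real.div_rpow (le_of_lt hq0) (by norm_num) _
    have hqq : q ^ (-(1/2 : ℝ)) * q ^ (2⁻¹ : ℝ) = 1 := by
      rw [← Real.rpow_add hq0]; norm_num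
    have h5 : q ^ (-(1/2 : ℝ)) * (2 * (q / 2) ^ (2⁻¹ : ℝ) * C0 d)
        = (2 / 2 ^ (2⁻¹ : ℝ)) * C0 d * (q ^ (-(1/2 : ℝ)) * q ^ (2⁻¹ : ℝ)) := by
      rw [hqd]; ring
    rw [h5, hqq, mul_one]
    have h7 : (1:ℝ) ≤ (2:ℝ) ^ (2⁻¹ : ℝ) := by
      calc (1:ℝ) = (2:ℝ) ^ (0:ℝ) := (Real.rpow_zero 2).symm
        _ ≤ (2:ℝ) ^ (2⁻¹ : ℝ) := Real.rpow_le_rpow_of_exponent_le one_le_two (by norm_num)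
    have h6 : ((2:ℝ) / (2:ℝ) ^ (2⁻¹ : ℝ)) ≤ 2 := div_le_self (by norm_num) h7
    nlinarith
  rw [h2] at h1
  calc q ^ (-(1/2 : ℝ)) * (∫ u, ‖u‖ ^ q ∂(stdGaussian d)) ^ q⁻¹
      ≤ q ^ (-(1/2 : ℝ)) * (2 * (q / 2) ^ (2⁻¹ : ℝ) * C0 d ^ q⁻¹) :=
        mul_le_mul_of_nonneg_left h1 (by positivity)
    _ ≤ q ^ (-(1/2 : ℝ)) * (2 * (q / 2) ^ (2⁻¹ : ℝ) * C0 d) := by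
        apply mul_le_mul_of_nonneg_left _ (by positivity)
        exact mul_le_mul_of_nonneg_left h3 (by positivity)
    _ ≤ 2 * C0 d := h4

lemma memℒp_ofReal_of_integrable_rpow {α : Type*} [MeasurableSpace α] {μ : Measure α}
    {f : α → ℝ} (hf0 : ∀ x, 0 ≤ f x) (hm : AEStronglyMeasurable f μ) {p : ℝ} (hp : 0 < p)
    (hint : Integrable (fun x => f x ^ p) μ) : MemLp f (ENNReal.ofReal p) μ := by
  refine ⟨hm, ?_⟩
  have hP0 : ENNReal.ofReal p ≠ 0 := by simp [ENNReal.ofReal_eq_zero, not_le, hp]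
  rw [eLpNorm_lt_top_iff_lintegral_rpow_enorm_lt_top hP0 ENNReal.ofReal_ne_top]
  rw [ENNReal.toReal_ofReal hp.le]
  have h2 := hint.2
  rw [hasFiniteIntegral_iff_norm] at h2
  have heq : ∀ x, ‖f x‖ₑ ^ p = ENNReal.ofReal ‖f x ^ p‖ := by
    intro x
    rw [Real.norm_eq_abs, abs_of_nonneg (Real.rpow_nonneg (hf0 x) p)]
    rw [← ofReal_norm, Real.norm_eq_abs, abs_of_nonneg (hf0 x)]
    rw [← ENNReal.ofReal_rpow_of_nonneg (hf0 x) hp.le]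
  calc ∫⁻ x, ‖f x‖ₑ ^ p ∂μ = ∫⁻ x, ENNReal.ofReal ‖f x ^ p‖ ∂μ :=
        lintegral_congr heq
    _ < ⊤ := h2

lemma minkowski_core {α : Type*} [MeasurableSpace α] {μ : Measure α}
    {φ g1 g2 : α → ℝ} {p : ℝ} (hp : 1 ≤ p)
    (hφm : AEStronglyMeasurable φ μ)
    (hg1 : MemLp g1 (ENNReal.ofReal p) μ) (hg2 : MemLp g2 (ENNReal.ofReal p) μ)
    (hg1n : ∀ u, 0 ≤ g1 u) (hg2n : ∀ u, 0 ≤ g2 u)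
    (hdom : ∀ u, |φ u| ≤ g1 u + g2 u) :
    (∫ u, |φ u| ^ p ∂μ) ^ p⁻¹ ≤
      (∫ u, (g1 u) ^ p ∂μ) ^ p⁻¹ + (∫ u, (g2 u) ^ p ∂μ) ^ p⁻¹ := by
  have hp0 : (0:ℝ) < p := lt_of_lt_of_le one_pos hp
  set P := ENNReal.ofReal p with hP
  have hP0 : P ≠ 0 := by simp [hP, ENNReal.ofReal_eq_zero, not_le, hp0]
  have hPtop : P ≠ ⊤ := ENNReal.ofReal_ne_top
  have hPt : P.toReal = p := ENNReal.toReal_ofReal hp0.le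
  have hnorm : ∀ u, ‖φ u‖ ≤ ‖g1 u + g2 u‖ := by
    intro u
    calc ‖φ u‖ = |φ u| := Real.norm_eq_abs _
      _ ≤ g1 u + g2 u := hdom u
      _ = |g1 u + g2 u| := (abs_of_nonneg (by have := hg1n u; have := hg2n u; linarith)).symm
      _ = ‖g1 u + g2 u‖ := (Real.norm_eq_abs _).symm
  have hφmem : MemLp φ P μ := (hg1.add hg2).of_le hφm (ae_of_all _ hnorm)
  have h1 : eLpNorm φ P μ ≤ eLpNorm (g1 + g2) P μ := eLpNorm_mono hnorm
  have h2 : eLpNorm (g1 + g2) P μ ≤ eLpNorm g1 P μ + eLpNorm g2 P μ :=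
    eLpNorm_add_le hg1.aestronglyMeasurable hg2.aestronglyMeasurable
      (by rw [hP]; exact_mod_cast ENNReal.one_le_ofReal.mpr hp)
  have h3 := le_trans h1 h2
  rw [hφmem.eLpNorm_eq_integral_rpow_norm hP0 hPtop,
    hg1.eLpNorm_eq_integral_rpow_norm hP0 hPtop,
    hg2.eLpNorm_eq_integral_rpow_norm hP0 hPtop, hPt] at h3
  rw [← ENNReal.ofReal_add (by positivity) (by positivity)] at h3
  have h4 := (ENNReal.ofReal_le_ofReal_iff (by positivity)).mp h3
  have habs : ∀ u : α, ‖φ u‖ = |φ u| := fun u => Real.norm_eq_abs _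
  simp_rw [habs] at h4
  have hg1abs : ∀ u : α, ‖g1 u‖ = g1 u := fun u => by
    rw [Real.norm_eq_abs, abs_of_nonneg (hg1n u)]
  have hg2abs : ∀ u : α, ‖g2 u‖ = g2 u := fun u => by
    rw [Real.norm_eq_abs, abs_of_nonneg (hg2n u)]
  simp_rw [hg1abs, hg2abs] at h4
  exact h4

end Aux

set_option maxHeartbeats 1000000 in
/-- sub-exponential norm of the zeroth-order finite difference.
If `∇f` is `M`-Lipschitz, `‖∇f(θ)‖ ≤ R`, `u ∼ N(0, I_d)`,
`φ(ν, u) = (f(θ + νu) - f(θ))/ν`, and `ν ≤ R/(M ‖u‖_{Ψ₂})`, then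
`‖φ(ν, u)‖_{Ψ₁} ≤ 2R ‖u‖_{Ψ₂}`. -/
theorem zo_finite_difference_subexponential
    (d : ℕ) (hd : 1 ≤ d) (M R ν : ℝ) (hM : 0 < M) (hR : 0 < R) (hν : 0 < ν)
    (f : Euc d → ℝ) (f' : Euc d → Euc d)
    (hgrad : ∀ θ, HasGradientAt f (f' θ) θ)
    (hlip : ∀ θ θ' : Euc d, ‖f' θ - f' θ'‖ ≤ M * ‖θ - θ'‖)
    (θ : Euc d) (hθ : ‖f' θ‖ ≤ R)
    (hνbound : ν ≤ R / (M * subGaussNorm (stdGaussian d) (fun u => ‖u‖))) :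
    subExpNorm (stdGaussian d) (fun u => (f (θ + ν • u) - f θ) / ν) ≤
      2 * R * subGaussNorm (stdGaussian d) (fun u => ‖u‖) := by
  set μ := stdGaussian d with hμ
  set K := subGaussNorm (stdGaussian d) (fun u => ‖u‖) with hKdef
  -- the sub-Gaussian family for the norm, with `|‖u‖|` rewritten to `‖u‖`
  have habs : ∀ (q : ℝ), (fun u : Euc d => |‖u‖| ^ q) = fun u : Euc d => ‖u‖ ^ q := by
    intro q; ext u; rw [abs_norm]
  -- boundedness of the sub-Gaussian family
  have hbdd : BddAbove (Set.range fun p : {p : ℝ // 1 ≤ p} =>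
      ((p : ℝ)) ^ (-(1 / 2 : ℝ)) * (∫ u, |‖u‖| ^ (p : ℝ) ∂μ) ^ ((p : ℝ))⁻¹) := by
    refine ⟨2 * C0 d, ?_⟩
    rintro x ⟨⟨q, hq⟩, rfl⟩
    simp only
    rw [habs q]
    exact moment_bound d q hq
  have hK0 : 0 ≤ K := by
    rw [hKdef, subGaussNorm]
    apply Real.iSup_nonneg
    rintro ⟨q, hq⟩
    have h1 : (0:ℝ) ≤ ∫ u, |‖u‖| ^ (q : ℝ) ∂(stdGaussian d) :=
      integral_nonneg fun u => by positivity
    have hq0 : (0:ℝ) ≤ q := le_trans zero_le_one hq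
    exact mul_nonneg (Real.rpow_nonneg hq0 _) (Real.rpow_nonneg h1 _)
  have hKle : ∀ q : ℝ, (hq : 1 ≤ q) →
      (∫ u, ‖u‖ ^ q ∂μ) ^ q⁻¹ ≤ q ^ ((1:ℝ)/2) * K := by
    intro q hq
    have hq0 : (0:ℝ) < q := lt_of_lt_of_le one_pos hq
    have h := le_ciSup hbdd ⟨q, hq⟩
    simp only at h
    rw [habs q] at h
    have hqq : q ^ ((1:ℝ)/2) * q ^ (-(1/2 : ℝ)) = 1 := by
      rw [← Real.rpow_add hq0]; norm_num
    calc (∫ u, ‖u‖ ^ q ∂μ) ^ q⁻¹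
        = q ^ ((1:ℝ)/2) * (q ^ (-(1/2 : ℝ)) * (∫ u, ‖u‖ ^ q ∂μ) ^ q⁻¹) := by
          rw [← mul_assoc, hqq, one_mul]
      _ ≤ q ^ ((1:ℝ)/2) * K := by
          apply mul_le_mul_of_nonneg_left _ (Real.rpow_nonneg hq0.le _)
          exact h
  -- positivity of K
  have hKpos : 0 < K := by
    rcases eq_or_lt_of_le hK0 with h | h
    · exfalso
      rw [← h, mul_zero, div_zero] at hνbound
      linarith
    · exact h
  have hMνK : M * ν * K ≤ R := by
    have h := (le_div_iff₀ (by positivity : 0 < M * K)).mp hνbound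
    nlinarith
  -- continuity of f
  have hfc : Continuous f :=
    Differentiable.continuous fun x => (hgrad x).differentiableAt
  have hφc : Continuous (fun u : Euc d => (f (θ + ν • u) - f θ) / ν) := by
    apply Continuous.div_const
    exact (hfc.comp (continuous_const.add (continuous_id.const_smul ν))).sub continuous_const
  -- pointwise domination
  have hdom : ∀ u : Euc d, |(f (θ + ν • u) - f θ) / ν| ≤
      R * ‖u‖ + (M * ν / 2) * ‖u‖ ^ (2:ℝ) := by
    intro u
    have hdesc := descent_lemma M f f' hgrad hlip θ (θ + ν • u)
    have hy : θ + ν • u - θ = ν • u := by abel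
    rw [hy] at hdesc
    have hnsm : ‖ν • u‖ = ν * ‖u‖ := by
      rw [norm_smul, Real.norm_eq_abs, abs_of_pos hν]
    have hinner : |⟪f' θ, ν • u⟫| ≤ R * (ν * ‖u‖) := by
      calc |⟪f' θ, ν • u⟫| ≤ ‖f' θ‖ * ‖ν • u‖ := abs_real_inner_le_norm _ _
        _ ≤ R * (ν * ‖u‖) := by rw [hnsm]; gcongr
    have htot : |f (θ + ν • u) - f θ| ≤ R * (ν * ‖u‖) + M / 2 * (ν * ‖u‖) ^ 2 := by
      have h1 : |f (θ + ν • u) - f θ| ≤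
          |f (θ + ν • u) - f θ - ⟪f' θ, ν • u⟫| + |⟪f' θ, ν • u⟫| := by
        have := abs_add_le (f (θ + ν • u) - f θ - ⟪f' θ, ν • u⟫) (⟪f' θ, ν • u⟫)
        simpa using this
      rw [hnsm] at hdesc
      linarith
    rw [abs_div, abs_of_pos hν, div_le_iff₀ hν]
    have hr2 : ‖u‖ ^ (2:ℝ) = ‖u‖ ^ (2:ℕ) := by
      rw [← Real.rpow_natCast ‖u‖ 2]; norm_num
    rw [hr2]
    nlinarith [htot, norm_nonneg u, sq_nonneg ‖u‖]
  -- main sup bound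
  rw [subExpNorm]
  apply ciSup_le
  rintro ⟨p, hp⟩
  simp only
  have hp0 : (0:ℝ) < p := lt_of_lt_of_le one_pos hp
  have h2p : (1:ℝ) ≤ 2 * p := by linarith
  have h2p0 : (0:ℝ) < 2 * p := by linarith
  -- MemLp facts
  have hnormmem : MemLp (fun u : Euc d => ‖u‖) (ENNReal.ofReal p) μ :=
    memℒp_ofReal_of_integrable_rpow (fun u => norm_nonneg u)
      continuous_norm.aestronglyMeasurable hp0 (integrable_norm_rpow_std d p hp0)
  have hsqint : Integrable (fun u : Euc d => (‖u‖ ^ (2:ℝ)) ^ p) μ := by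
    have : (fun u : Euc d => (‖u‖ ^ (2:ℝ)) ^ p) = fun u : Euc d => ‖u‖ ^ (2 * p) := by
      ext u
      rw [← Real.rpow_mul (norm_nonneg u)]
    rw [this]
    exact integrable_norm_rpow_std d (2 * p) h2p0
  have hsqmem : MemLp (fun u : Euc d => ‖u‖ ^ (2:ℝ)) (ENNReal.ofReal p) μ :=
    memℒp_ofReal_of_integrable_rpow (fun u => Real.rpow_nonneg (norm_nonneg u) _)
      (continuous_norm.rpow_const (fun u => Or.inr (by norm_num))).aestronglyMeasurable
      hp0 hsqint
  have hg1mem : MemLp (fun u : Euc d => R * ‖u‖) (ENNReal.ofReal p) μ :=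
    hnormmem.const_mul R
  have hg2mem : MemLp (fun u : Euc d => (M * ν / 2) * ‖u‖ ^ (2:ℝ)) (ENNReal.ofReal p) μ :=
    hsqmem.const_mul (M * ν / 2)
  have hmink := minkowski_core hp hφc.aestronglyMeasurable hg1mem hg2mem
    (fun u => by positivity) (fun u => by positivity) hdom
  -- compute the two Lp norms of the dominators
  have hg1calc : (∫ u, (R * ‖u‖) ^ p ∂μ) ^ p⁻¹ = R * (∫ u, ‖u‖ ^ p ∂μ) ^ p⁻¹ := by
    have h1 : (fun u : Euc d => (R * ‖u‖) ^ p) = fun u : Euc d => R ^ p * ‖u‖ ^ p := by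
      ext u; rw [Real.mul_rpow hR.le (norm_nonneg u)]
    rw [h1, integral_const_mul,
      Real.mul_rpow (Real.rpow_nonneg hR.le _) (integral_nonneg fun u => by positivity),
      ← Real.rpow_mul hR.le, mul_inv_cancel₀ (ne_of_gt hp0), Real.rpow_one]
  have hg2calc : (∫ u, ((M * ν / 2) * ‖u‖ ^ (2:ℝ)) ^ p ∂μ) ^ p⁻¹
      = (M * ν / 2) * (∫ u, ‖u‖ ^ (2 * p) ∂μ) ^ p⁻¹ := by
    have h1 : (fun u : Euc d => ((M * ν / 2) * ‖u‖ ^ (2:ℝ)) ^ p)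
        = fun u : Euc d => (M * ν / 2) ^ p * ‖u‖ ^ (2 * p) := by
      ext u
      rw [Real.mul_rpow (by positivity) (Real.rpow_nonneg (norm_nonneg u) _),
        ← Real.rpow_mul (norm_nonneg u)]
    rw [h1, integral_const_mul,
      Real.mul_rpow (Real.rpow_nonneg (by positivity) _) (integral_nonneg fun u => by positivity),
      ← Real.rpow_mul (by positivity), mul_inv_cancel₀ (ne_of_gt hp0), Real.rpow_one]
  -- moment bounds
  have hm1 : (∫ u, ‖u‖ ^ p ∂μ) ^ p⁻¹ ≤ p ^ ((1:ℝ)/2) * K := hKle p hp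
  have hm2 : (∫ u, ‖u‖ ^ (2 * p) ∂μ) ^ p⁻¹ ≤ 2 * p * K ^ 2 := by
    set J := ∫ u, ‖u‖ ^ (2 * p) ∂μ with hJ
    have hJ0 : (0:ℝ) ≤ J := integral_nonneg fun u => by positivity
    have h1 : J ^ (2 * p)⁻¹ ≤ (2 * p) ^ ((1:ℝ)/2) * K := hKle (2 * p) h2p
    have h2 : J ^ p⁻¹ = (J ^ (2 * p)⁻¹) ^ (2:ℕ) := by
      rw [← Real.rpow_natCast (J ^ (2 * p)⁻¹) 2, ← Real.rpow_mul hJ0]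
      congr 1
      push_cast
      field_simp
    rw [h2]
    calc (J ^ (2 * p)⁻¹) ^ (2:ℕ) ≤ ((2 * p) ^ ((1:ℝ)/2) * K) ^ (2:ℕ) := by
          apply pow_le_pow_left₀ (Real.rpow_nonneg hJ0 _) h1
      _ = ((2 * p) ^ ((1:ℝ)/2)) ^ (2:ℕ) * K ^ 2 := by ring
      _ = 2 * p * K ^ 2 := by
          congr 1
          rw [← Real.rpow_natCast ((2 * p) ^ ((1:ℝ)/2)) 2, ← Real.rpow_mul h2p0.le]
          push_cast
          norm_num
  -- final arithmetic
  have hsqrtp : p ^ ((1:ℝ)/2) ≤ p := by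
    calc p ^ ((1:ℝ)/2) ≤ p ^ (1:ℝ) :=
          Real.rpow_le_rpow_of_exponent_le hp (by norm_num)
      _ = p := Real.rpow_one p
  have hchain : (∫ u, |(f (θ + ν • u) - f θ) / ν| ^ p ∂μ) ^ p⁻¹
      ≤ R * (p ^ ((1:ℝ)/2) * K) + (M * ν / 2) * (2 * p * K ^ 2) := by
    calc (∫ u, |(f (θ + ν • u) - f θ) / ν| ^ p ∂μ) ^ p⁻¹
        ≤ (∫ u, (R * ‖u‖) ^ p ∂μ) ^ p⁻¹
          + (∫ u, ((M * ν / 2) * ‖u‖ ^ (2:ℝ)) ^ p ∂μ) ^ p⁻¹ := hmink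
      _ = R * (∫ u, ‖u‖ ^ p ∂μ) ^ p⁻¹
          + (M * ν / 2) * (∫ u, ‖u‖ ^ (2 * p) ∂μ) ^ p⁻¹ := by rw [hg1calc, hg2calc]
      _ ≤ R * (p ^ ((1:ℝ)/2) * K) + (M * ν / 2) * (2 * p * K ^ 2) := by
          gcongr
  have hfinal : p⁻¹ * (R * (p ^ ((1:ℝ)/2) * K) + (M * ν / 2) * (2 * p * K ^ 2)) ≤ 2 * R * K := by
    have h1 : p⁻¹ * (R * (p ^ ((1:ℝ)/2) * K)) ≤ R * K := by
      rw [show p⁻¹ * (R * (p ^ ((1:ℝ)/2) * K)) = (R * K) * (p ^ ((1:ℝ)/2) * p⁻¹) by ring]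
      have : p ^ ((1:ℝ)/2) * p⁻¹ ≤ 1 := by
        rw [← div_eq_mul_inv, div_le_one hp0]
        exact hsqrtp
      nlinarith [mul_pos hR hKpos]
    have h2 : p⁻¹ * ((M * ν / 2) * (2 * p * K ^ 2)) = M * ν * K ^ 2 := by
      field_simp
    have h3 : M * ν * K ^ 2 ≤ R * K := by
      nlinarith [hMνK, hKpos]
    have := mul_le_mul_of_nonneg_left hchain (inv_nonneg.mpr hp0.le)
    nlinarith [h1, h3]
  calc p⁻¹ * (∫ u, |(f (θ + ν • u) - f θ) / ν| ^ p ∂μ) ^ p⁻¹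
      ≤ p⁻¹ * (R * (p ^ ((1:ℝ)/2) * K) + (M * ν / 2) * (2 * p * K ^ 2)) :=
        mul_le_mul_of_nonneg_left hchain (inv_nonneg.mpr hp0.le)
    _ ≤ 2 * R * K := hfinal
end
end

section
/- Let f : ℝ^d → ℝ be continuously differentiable with M-Lipschitz gradient and let u ∼ N(0, I_d). Then for every θ ∈ ℝ^d and every ν > 0, the Gaussian-smoothed gradient ∇f_ν(θ) = E[∇f(θ + νu)] satisfies ‖∇f_ν(θ) − ∇f(θ)‖ ≤ M·ν·√d. -/
open MeasureTheory ProbabilityTheory Real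
open scoped ENNReal NNReal RealInnerProductSpace

noncomputable section

namespace GaussianSmoothingAux

lemma pdf_eval (x : ℝ) :
    gaussianPDFReal 0 1 x = (Real.sqrt (2 * π))⁻¹ * Real.exp (-(1/2) * x ^ 2) := by
  simp only [gaussianPDFReal, NNReal.coe_one, mul_one, sub_zero]
  ring_nf

lemma integrable_sq_pdf : Integrable (fun x : ℝ => x ^ 2 * gaussianPDFReal 0 1 x) volume := by
  simp_rw [pdf_eval]
  have h := integrable_rpow_mul_exp_neg_mul_sq (b := 1/2) (by norm_num) (s := 2) (by norm_num)
  simp_rw [Real.rpow_two] at h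
  exact (h.const_mul (Real.sqrt (2 * π))⁻¹).congr (Filter.Eventually.of_forall fun x => by ring)

lemma Gamma_three_half : Real.Gamma (3/2) = Real.sqrt π / 2 := by
  have : (3:ℝ)/2 = 1/2 + 1 := by norm_num
  rw [this, Real.Gamma_add_one (by norm_num), Real.Gamma_one_half_eq]
  ring

lemma integral_sq_exp : ∫ x : ℝ, x ^ 2 * Real.exp (-(1/2) * x ^ 2) = Real.sqrt (2 * π) := by
  have habs : (∫ x : ℝ, x ^ 2 * Real.exp (-(1/2) * x ^ 2))
      = ∫ x : ℝ, (fun t : ℝ => t ^ 2 * Real.exp (-(1/2) * t ^ 2)) |x| := by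
    congr 1; ext x; simp only [sq_abs]
  rw [habs, integral_comp_abs (f := fun t : ℝ => t ^ 2 * Real.exp (-(1/2) * t ^ 2))]
  have h := integral_rpow_mul_exp_neg_mul_rpow (p := 2) (q := 2) (b := 1/2)
    (by norm_num) (by norm_num) (by norm_num)
  simp_rw [Real.rpow_two] at h
  rw [h]
  have hg : ((2:ℝ) + 1) / 2 = 3/2 := by norm_num
  rw [hg, Gamma_three_half]
  have h1 : ((1:ℝ)/2) ^ (-(2 + 1) / 2 : ℝ) = 2 ^ ((3:ℝ)/2) := by
    rw [one_div, Real.inv_rpow (by norm_num)]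
    rw [← Real.rpow_neg (by norm_num)]
    norm_num
  rw [h1]
  have h2 : (2:ℝ) ^ ((3:ℝ)/2) = 2 * Real.sqrt 2 := by
    have : (3:ℝ)/2 = 1 + 1/2 := by norm_num
    rw [this, Real.rpow_add (by norm_num), Real.rpow_one, ← Real.sqrt_eq_rpow]
  rw [h2, Real.sqrt_mul (by norm_num)]
  ring

lemma integrable_gauss_of (g : ℝ → ℝ)
    (hg : Integrable (fun x => g x * gaussianPDFReal 0 1 x) volume) :
    Integrable g (gaussianReal 0 1) := by
  rw [gaussianReal_of_var_ne_zero 0 one_ne_zero]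
  rw [integrable_withDensity_iff (measurable_gaussianPDF 0 1)
    (Filter.Eventually.of_forall fun x => ENNReal.ofReal_lt_top)]
  apply hg.congr
  refine Filter.Eventually.of_forall fun x => ?_
  simp only [gaussianPDF_def, ENNReal.toReal_ofReal (gaussianPDFReal_nonneg 0 1 x)]

lemma integral_gauss (g : ℝ → ℝ) :
    ∫ x, g x ∂(gaussianReal 0 1) = ∫ x, g x * gaussianPDFReal 0 1 x := by
  rw [gaussianReal_of_var_ne_zero 0 one_ne_zero]
  have hd : (gaussianPDF 0 1) = fun x => ((gaussianPDFReal 0 1 x).toNNReal : ℝ≥0∞) := by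
    funext x; rw [gaussianPDF_def]; rfl
  rw [hd, integral_withDensity_eq_integral_smul
    ((measurable_gaussianPDFReal 0 1).real_toNNReal)]
  congr 1; funext x
  rw [NNReal.smul_def, smul_eq_mul, Real.coe_toNNReal _ (gaussianPDFReal_nonneg 0 1 x), mul_comm]

lemma integrable_sq_gauss : Integrable (fun x : ℝ => x ^ 2) (gaussianReal 0 1) :=
  integrable_gauss_of _ integrable_sq_pdf

lemma integral_sq_gauss : ∫ x, x ^ 2 ∂(gaussianReal 0 1) = 1 := by
  rw [integral_gauss]
  simp_rw [pdf_eval]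
  have : (∫ x : ℝ, x ^ 2 * ((Real.sqrt (2 * π))⁻¹ * Real.exp (-(1/2) * x ^ 2)))
      = (Real.sqrt (2 * π))⁻¹ * ∫ x : ℝ, x ^ 2 * Real.exp (-(1/2) * x ^ 2) := by
    rw [← integral_const_mul]
    congr 1; funext x; ring
  rw [this, integral_sq_exp, inv_mul_cancel₀]
  positivity

variable {d : ℕ}

lemma pi_map_eval (i : Fin d) :
    (Measure.pi fun _ : Fin d => gaussianReal 0 1).map (Function.eval i) = gaussianReal 0 1 := by
  ext s hs
  rw [Measure.map_apply (measurable_pi_apply i) hs]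
  have : Function.eval i ⁻¹' s
      = Set.pi Set.univ (Function.update (fun _ : Fin d => (Set.univ : Set ℝ)) i s) := by
    ext x
    simp only [Set.mem_preimage, Set.mem_pi, Set.mem_univ, true_implies, Function.eval]
    constructor
    · intro hx j
      rcases eq_or_ne j i with rfl | hj
      · simpa using hx
      · simp [Function.update_of_ne hj]
    · intro h; simpa using h i
  rw [this, Measure.pi_pi]
  rw [Finset.prod_eq_single i (fun j _ hj => by simp [Function.update_of_ne hj]) (by simp)]
  simp

lemma integrable_eval_sq (i : Fin d) :
    Integrable (fun x : Fin d → ℝ => x i ^ 2) (Measure.pi fun _ : Fin d => gaussianReal 0 1) := by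
  have hg : AEStronglyMeasurable (fun y : ℝ => y ^ 2)
      ((Measure.pi fun _ : Fin d => gaussianReal 0 1).map (Function.eval i)) :=
    (continuous_pow 2).aestronglyMeasurable
  have h := (integrable_map_measure hg (measurable_pi_apply i).aemeasurable).mp
    (by rw [pi_map_eval i]; exact integrable_sq_gauss)
  exact h

lemma integral_eval_sq (i : Fin d) :
    ∫ x, x i ^ 2 ∂(Measure.pi fun _ : Fin d => gaussianReal 0 1) = 1 := by
  have h := integral_sq_gauss
  rw [← pi_map_eval i,
    integral_map (measurable_pi_apply i).aemeasurable (by fun_prop)] at h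
  exact h

instance : IsProbabilityMeasure (stdGaussian d) :=
  Measure.isProbabilityMeasure_map (MeasurableEquiv.measurable _).aemeasurable

lemma norm_symm_sq (x : Fin d → ℝ) :
    ‖(MeasurableEquiv.toLp 2 (Fin d → ℝ)) x‖ ^ 2 = ∑ i, x i ^ 2 := by
  rw [EuclideanSpace.norm_eq, Real.sq_sqrt (by positivity)]
  refine Finset.sum_congr rfl fun i _ => ?_
  rw [Real.norm_eq_abs, sq_abs]
  rfl

lemma integrable_norm_sq_stdGaussian :
    Integrable (fun u : Euc d => ‖u‖ ^ 2) (stdGaussian d) := by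
  rw [_root_.stdGaussian, integrable_map_equiv]
  have : ((fun u : Euc d => ‖u‖ ^ 2) ∘ (MeasurableEquiv.toLp 2 (Fin d → ℝ)))
      = fun x : Fin d → ℝ => ∑ i, x i ^ 2 := by
    funext x; exact norm_symm_sq x
  rw [this]
  exact integrable_finset_sum _ fun i _ => integrable_eval_sq i

lemma integral_norm_sq_stdGaussian :
    ∫ u, ‖u‖ ^ 2 ∂(stdGaussian d) = d := by
  rw [_root_.stdGaussian, integral_map_equiv]
  have : (fun x : Fin d → ℝ => ‖(MeasurableEquiv.toLp 2 (Fin d → ℝ)) x‖ ^ 2)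
      = fun x : Fin d → ℝ => ∑ i, x i ^ 2 := by
    funext x; exact norm_symm_sq x
  rw [this, integral_finset_sum _ fun i _ => integrable_eval_sq i]
  simp [integral_eval_sq]

lemma memℒp_norm_stdGaussian :
    MemLp (fun u : Euc d => ‖u‖) 2 (stdGaussian d) :=
  (memLp_two_iff_integrable_sq continuous_norm.aestronglyMeasurable).mpr
    integrable_norm_sq_stdGaussian

lemma integrable_norm_stdGaussian :
    Integrable (fun u : Euc d => ‖u‖) (stdGaussian d) :=
  memLp_one_iff_integrable.mp
    (memℒp_norm_stdGaussian.mono_exponent (by norm_num))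

lemma integral_norm_stdGaussian_le :
    ∫ u, ‖u‖ ∂(stdGaussian d) ≤ Real.sqrt d := by
  set X : Euc d → ℝ := fun u => ‖u‖ with hX
  have hvar := variance_nonneg X (stdGaussian d)
  rw [variance_eq_sub memℒp_norm_stdGaussian] at hvar
  have hsq : (stdGaussian d)[X ^ 2] = (d : ℝ) := by
    have : (X ^ 2) = fun u : Euc d => ‖u‖ ^ 2 := by funext u; simp [hX]
    rw [this, integral_norm_sq_stdGaussian]
  rw [hsq] at hvar
  have h1 : ((stdGaussian d)[X]) ^ 2 ≤ (d : ℝ) := by linarith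
  have h0 : 0 ≤ (stdGaussian d)[X] := integral_nonneg fun u => norm_nonneg _
  exact (Real.le_sqrt h0 (Nat.cast_nonneg d)).mpr h1

end GaussianSmoothingAux

open GaussianSmoothingAux

/-- bias of Gaussian smoothing.  If `f` is continuously differentiable
with `M`-Lipschitz gradient and `u ∼ N(0, I_d)`, then for every `θ` and `ν > 0` the
Gaussian-smoothed gradient `∇f_ν(θ) = E[∇f(θ + νu)]` satisfies
`‖∇f_ν(θ) - ∇f(θ)‖ ≤ M ν √d`. -/
theorem gaussian_smoothing_gradient_bias
    (d : ℕ) (hd : 1 ≤ d) (M : ℝ) (hM : 0 < M)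
    (f : Euc d → ℝ) (f' : Euc d → Euc d)
    (hgrad : ∀ θ, HasGradientAt f (f' θ) θ)
    (hcont : Continuous f')
    (hlip : ∀ θ θ' : Euc d, ‖f' θ - f' θ'‖ ≤ M * ‖θ - θ'‖)
    (θ : Euc d) (ν : ℝ) (hν : 0 < ν) :
    ‖(∫ u, f' (θ + ν • u) ∂(stdGaussian d)) - f' θ‖ ≤ M * ν * Real.sqrt d := by
  set μ := stdGaussian d with hμ
  have hmeas : AEStronglyMeasurable (fun u : Euc d => f' (θ + ν • u)) μ :=
    (hcont.comp (continuous_const.add (continuous_const_smul ν))).aestronglyMeasurable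
  have hbound : ∀ u : Euc d, ‖f' (θ + ν • u) - f' θ‖ ≤ M * ν * ‖u‖ := by
    intro u
    calc ‖f' (θ + ν • u) - f' θ‖ ≤ M * ‖θ + ν • u - θ‖ := hlip _ _
    _ = M * ν * ‖u‖ := by
        rw [add_sub_cancel_left, norm_smul, Real.norm_eq_abs, abs_of_pos hν, mul_assoc]
  have hIntf : Integrable (fun u : Euc d => f' (θ + ν • u)) μ := by
    refine Integrable.mono' (((integrable_norm_stdGaussian).const_mul (M * ν)).add
      (integrable_const ‖f' θ‖)) hmeas ?_
    refine Filter.Eventually.of_forall fun u => ?_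
    calc ‖f' (θ + ν • u)‖ = ‖(f' (θ + ν • u) - f' θ) + f' θ‖ := by rw [sub_add_cancel]
    _ ≤ ‖f' (θ + ν • u) - f' θ‖ + ‖f' θ‖ := norm_add_le _ _
    _ ≤ M * ν * ‖u‖ + ‖f' θ‖ := by gcongr; exact hbound u
  have key : (∫ u, f' (θ + ν • u) ∂μ) - f' θ = ∫ u, (f' (θ + ν • u) - f' θ) ∂μ := by
    rw [integral_sub hIntf (integrable_const _), integral_const, probReal_univ,
      one_smul]
  rw [key]
  calc ‖∫ u, (f' (θ + ν • u) - f' θ) ∂μ‖ ≤ ∫ u, ‖f' (θ + ν • u) - f' θ‖ ∂μ :=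
        norm_integral_le_integral_norm _
  _ ≤ ∫ u, M * ν * ‖u‖ ∂μ := by
      refine integral_mono (hIntf.sub (integrable_const _)).norm
        ((integrable_norm_stdGaussian).const_mul (M * ν)) ?_
      exact hbound
  _ = M * ν * ∫ u, ‖u‖ ∂μ := integral_const_mul _ _
  _ ≤ M * ν * Real.sqrt d :=
      mul_le_mul_of_nonneg_left integral_norm_stdGaussian_le (by positivity)
end
end
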